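/- Let can be a natural assignment with k-bit metadata for a (u, m)-dictionary (states are subsets of U of size at most m, and m < u). If for element v Property 1 holds (for every cell ℓ there exist states q ∋ v and q' ∌ v with can(q)[ℓ] = can(q')[ℓ]), then Property 2 also holds for v: for every cell ℓ there exist states q₁, q₁' both containing v with can(q₁)[ℓ] ≠ can(q₁')[ℓ], and states q₂, q₂' both not containing v with can(q₂)[ℓ] ≠ can(q₂')[ℓ]. -/

import Mathlib

theorem stmt8 (U : Type*) [Fintype U] [DecidableEq U] (m k : ℕ)
    (hm : m < Fintype.card U)
    (can : {q : Finset U // q.card ≤ m} → Fin m → Option U × Fin (2 ^ k))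
    -- naturality of the first component: ⊥ or an element of the state
    (hnat1 : ∀ q ℓ a, (can q ℓ).1 = some a → a ∈ q.1)
    -- naturality: each element of the state appears in some cell
    (hnat2 : ∀ q, ∀ a ∈ q.1, ∃ ℓ, (can q ℓ).1 = some a)
    (v : U)
    -- Property 1 for v
    (hprop1 : ∀ ℓ : Fin m, ∃ q q' : {q : Finset U // q.card ≤ m},
      v ∈ q.1 ∧ v ∉ q'.1 ∧ can q ℓ = can q' ℓ) :
    -- Property 2 for v
    ∀ ℓ : Fin m,
      (∃ q₁ q₁' : {q : Finset U // q.card ≤ m},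
        v ∈ q₁.1 ∧ v ∈ q₁'.1 ∧ can q₁ ℓ ≠ can q₁' ℓ) ∧
      (∃ q₂ q₂' : {q : Finset U // q.card ≤ m},
        v ∉ q₂.1 ∧ v ∉ q₂'.1 ∧ can q₂ ℓ ≠ can q₂' ℓ) := by
  intro ℓ
  have hm1 : 1 ≤ m := ℓ.pos
  -- key lemma: a full-size state has every cell occupied
  have hfull : ∀ q : {q : Finset U // q.card ≤ m}, q.1.card = m →
      ∃ a ∈ q.1, (can q ℓ).1 = some a := by
    intro q hq
    have hchoice : ∀ a : {x // x ∈ q.1}, ∃ l : Fin m, (can q l).1 = some a.1 :=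
      fun a => hnat2 q a.1 a.2
    choose g hg using hchoice
    have hginj : Function.Injective g := by
      intro a b hab
      have h1 := hg a
      rw [hab, hg b] at h1
      exact Subtype.ext (Option.some.inj h1).symm
    have hcard : Fintype.card {x // x ∈ q.1} = Fintype.card (Fin m) := by
      simp [Fintype.card_coe, hq]
    have hbij : Function.Bijective g :=
      (Fintype.bijective_iff_injective_and_card g).mpr ⟨hginj, hcard⟩
    obtain ⟨a, ha⟩ := hbij.2 ℓ
    exact ⟨a.1, a.2, by rw [← ha]; exact hg a⟩
  -- the empty state
  have hempty_le : (∅ : Finset U).card ≤ m := by simp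
  have hempty_none : (can ⟨∅, hempty_le⟩ ℓ).1 = none := by
    cases h : (can ⟨∅, hempty_le⟩ ℓ).1 with
    | none => rfl
    | some a => exact absurd (hnat1 _ ℓ a h) (by simp)
  constructor
  · -- states containing v
    obtain ⟨q, q', hv, hv', heq⟩ := hprop1 ℓ
    -- the common value is not `some v`
    have hnv : (can q ℓ).1 ≠ some v := by
      intro h
      rw [heq] at h
      exact hv' (hnat1 q' ℓ v h)
    cases h : (can q ℓ).1 with
    | none =>
      -- build a full state containing v
      have hsub : m - 1 ≤ (Finset.univ.erase v).card := by
        rw [Finset.card_erase_of_mem (Finset.mem_univ v), Finset.card_univ]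
        omega
      obtain ⟨T, hT, hTcard⟩ := Finset.exists_subset_card_eq hsub
      have hvT : v ∉ T := fun hx => (Finset.mem_erase.mp (hT hx)).1 rfl
      have hScard : (insert v T).card = m := by
        rw [Finset.card_insert_of_notMem hvT, hTcard]
        omega
      refine ⟨⟨insert v T, le_of_eq hScard⟩, q, Finset.mem_insert_self v T, hv, ?_⟩
      obtain ⟨a, _, ha⟩ := hfull ⟨insert v T, le_of_eq hScard⟩ hScard
      intro hc
      rw [hc, h] at ha
      exact absurd ha.symm (Option.some_ne_none a)
    | some a =>
      have hav : a ≠ v := fun hav => hnv (hav ▸ h)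
      -- build a full state containing v avoiding a
      have hsub : m - 1 ≤ ((Finset.univ.erase v).erase a).card := by
        rw [Finset.card_erase_of_mem
            (Finset.mem_erase.mpr ⟨hav, Finset.mem_univ a⟩),
          Finset.card_erase_of_mem (Finset.mem_univ v), Finset.card_univ]
        omega
      obtain ⟨T, hT, hTcard⟩ := Finset.exists_subset_card_eq hsub
      have hvT : v ∉ T := fun hx =>
        (Finset.mem_erase.mp (Finset.mem_erase.mp (hT hx)).2).1 rfl
      have haT : a ∉ T := fun hx => (Finset.mem_erase.mp (hT hx)).1 rfl
      have hScard : (insert v T).card = m := by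
        rw [Finset.card_insert_of_notMem hvT, hTcard]
        omega
      have haS : a ∉ insert v T := by
        simp only [Finset.mem_insert]
        rintro (rfl | hx)
        · exact hav rfl
        · exact haT hx
      refine ⟨⟨insert v T, le_of_eq hScard⟩, q, Finset.mem_insert_self v T, hv, ?_⟩
      obtain ⟨b, hb, hbval⟩ := hfull ⟨insert v T, le_of_eq hScard⟩ hScard
      intro hc
      rw [hc, h] at hbval
      exact haS (Option.some.inj hbval ▸ hb)
  · -- states not containing v
    have hsub : m ≤ (Finset.univ.erase v).card := by
      rw [Finset.card_erase_of_mem (Finset.mem_univ v), Finset.card_univ]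
      omega
    obtain ⟨S, hS, hScard⟩ := Finset.exists_subset_card_eq hsub
    have hvS : v ∉ S := fun hx => (Finset.mem_erase.mp (hS hx)).1 rfl
    obtain ⟨a, _, ha⟩ := hfull ⟨S, le_of_eq hScard⟩ hScard
    refine ⟨⟨S, le_of_eq hScard⟩, ⟨∅, hempty_le⟩, hvS, by simp, ?_⟩
    intro hc
    rw [hc, hempty_none] at ha
    exact absurd ha.symm (Option.some_ne_none a)
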